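/- Let X be a path-connected semi-locally small loop space. If there exist a point x ∈ X and a covering p : X̃ → X with p(x̃) = x and p₋(π₁(X̃, x̃)) = π₁ˢ(X,x), then X̃ is a small loop space (every loop in X̃ is small). -/

import Mathlib

open CategoryTheory Topology

attribute [local instance] Path.Homotopic.setoid

noncomputable section

variable {X Y E : Type*} [TopologicalSpace X] [TopologicalSpace Y] [TopologicalSpace E]

/-- Build an element of the fundamental group from a homotopy class of loops. -/
def fromLoop {x : X} (p : Path.Homotopic.Quotient x x) : FundamentalGroup X x :=
  FundamentalGroup.fromPath p

/-- The homotopy class of loops underlying an element of the fundamental group. -/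
def toLoop {x : X} (γ : FundamentalGroup X x) : Path.Homotopic.Quotient x x :=
  FundamentalGroup.toPath γ

/-- A fundamental group element is *small* if it has a loop representative inside every
neighborhood of the basepoint. -/
def IsSmall {x : X} (γ : FundamentalGroup X x) : Prop :=
  ∀ U ∈ nhds x, ∃ δ : Path x x, (∀ t, δ t ∈ U) ∧ fromLoop ⟦δ⟧ = γ

/-- The set of small loop classes, i.e. the carrier of the small loop group `π₁ˢ(X,x)`. -/
def smallSet (X : Type*) [TopologicalSpace X] (x : X) : Set (FundamentalGroup X x) :=
  {γ | IsSmall γ}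

/-- Conjugate of a loop class at `y` by a path `α` from `x` to `y`: `α * β * α⁻¹`. -/
def conjPath {x y : X} (α : Path x y) (β : FundamentalGroup X y) : FundamentalGroup X x :=
  fromLoop (Path.Homotopic.Quotient.trans
    (Path.Homotopic.Quotient.trans (⟦α⟧ : Path.Homotopic.Quotient x y) (toLoop β))
    (⟦α.symm⟧ : Path.Homotopic.Quotient y x))

/-- The SG subgroup `π₁ˢᵍ(X,x)`: generated by conjugates of small loop classes. -/
def sgSubgroup (X : Type*) [TopologicalSpace X] (x : X) : Subgroup (FundamentalGroup X x) :=
  Subgroup.closure {g | ∃ (y : X) (α : Path x y) (β : FundamentalGroup X y), IsSmall β ∧ g = conjPath α β}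

/-- The map induced on fundamental groups by a continuous map. -/
def piMap (f : C(X, Y)) (x : X) (γ : FundamentalGroup X x) : FundamentalGroup Y (f x) :=
  fromLoop (Path.Homotopic.Quotient.map (toLoop γ) f)

/-- A small loop space: a path-connected, non-simply connected space all of whose loops
are small. -/
def IsSmallLoopSpace (X : Type*) [TopologicalSpace X] : Prop :=
  PathConnectedSpace X ∧ ¬ SimplyConnectedSpace X ∧
    ∀ (x : X) (γ : FundamentalGroup X x), IsSmall γ

/-- A space is homotopically Hausdorff if every nontrivial loop class can be kept away from
some neighborhood of its basepoint. -/
def HomotopicallyHausdorff (X : Type*) [TopologicalSpace X] : Prop :=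
  ∀ (x : X) (γ : FundamentalGroup X x), γ ≠ 1 →
    ∃ U ∈ nhds x, ∀ δ : Path x x, (∀ t, δ t ∈ U) → fromLoop ⟦δ⟧ ≠ γ

/-- The image of `π₁(U,y) → π₁(X,y)`: classes of loops having a representative inside `U`. -/
def loopsIn (U : Set X) (y : X) : Set (FundamentalGroup X y) :=
  {γ | ∃ δ : Path y y, (∀ t, δ t ∈ U) ∧ fromLoop ⟦δ⟧ = γ}

/-- A semi-locally small loop space. -/
def SemiLocallySmallLoop (X : Type*) [TopologicalSpace X] : Prop :=
  ∀ x : X, ∃ U : Set X, IsOpen U ∧ x ∈ U ∧ ∀ y ∈ U, loopsIn U y = smallSet X y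



section AuxiliaryLemmas

open unitInterval Set

variable {x y z : X}

/-- Quotient-level smallness of a loop class. -/
def IsSmallQ {x : X} (q : Path.Homotopic.Quotient x x) : Prop :=
  ∀ U ∈ nhds x, ∃ δ : Path x x, (∀ t, δ t ∈ U) ∧ (⟦δ⟧ : Path.Homotopic.Quotient x x) = q

lemma toLoop_fromLoop {x : X} (q : Path.Homotopic.Quotient x x) : toLoop (fromLoop q) = q :=
  rfl

lemma fromLoop_eq_iff {x : X} (q : Path.Homotopic.Quotient x x) (γ : FundamentalGroup X x) :
    fromLoop q = γ ↔ q = toLoop γ :=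
  Iff.rfl

lemma IsSmall.toQ {x : X} {γ : FundamentalGroup X x} (h : IsSmall γ) : IsSmallQ (toLoop γ) :=
  fun U hU => by
    obtain ⟨δ, h1, h2⟩ := h U hU
    exact ⟨δ, h1, (fromLoop_eq_iff _ _).mp h2⟩

/-- View a homotopy class of paths as a morphism in the fundamental groupoid. -/
def toHom {x y : X} (q : Path.Homotopic.Quotient x y) :
    FundamentalGroupoid.mk x ⟶ FundamentalGroupoid.mk y := q

lemma toHom_inj {x y : X} {q q' : Path.Homotopic.Quotient x y} (h : toHom q = toHom q') :
    q = q' := h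

lemma trans_eq_comp (P : Path x y) (Q : Path y z) :
    toHom ⟦P.trans Q⟧ = toHom ⟦P⟧ ≫ toHom ⟦Q⟧ :=
  rfl

lemma id_eq_refl : 𝟙 (FundamentalGroupoid.mk x) = toHom ⟦Path.refl x⟧ := rfl

lemma symm_eq_inv (P : Path x y) :
    toHom ⟦P.symm⟧ = CategoryTheory.inv (toHom ⟦P⟧) := by
  apply CategoryTheory.IsIso.eq_inv_of_hom_inv_id
  rw [← trans_eq_comp, id_eq_refl]
  exact congrArg toHom (Quotient.sound ⟨(Path.Homotopy.reflTransSymm P).symm⟩)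

lemma quot_cancel (P : Path x y) (g : Path x x) :
    (⟦P.trans ((P.symm.trans (g.trans P)).trans P.symm)⟧ : Path.Homotopic.Quotient x x) =
      ⟦g⟧ := by
  apply toHom_inj
  simp only [trans_eq_comp, symm_eq_inv]
  simp

lemma quot_regroup (s : Path x y) (Θ : Path y z) (β : Path z z) :
    (⟦(s.trans Θ).trans (β.trans (s.trans Θ).symm)⟧ : Path.Homotopic.Quotient x x) =
      ⟦s.trans ((Θ.trans (β.trans Θ.symm)).trans s.symm)⟧ := by
  apply toHom_inj
  simp only [trans_eq_comp, symm_eq_inv, Path.trans_symm]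
  simp

lemma quot_refl_conj (h : x = y) (β : Path y y) :
    (⟦((Path.refl y).cast h rfl).trans (β.trans ((Path.refl y).cast h rfl).symm)⟧ :
      Path.Homotopic.Quotient x x) = ⟦(β.cast h h : Path x x)⟧ := by
  subst h
  have h1 : (Path.refl x).cast rfl rfl = Path.refl x := by ext t; rfl
  have h2 : β.cast rfl rfl = β := by ext t; rfl
  rw [h1, h2]
  apply toHom_inj
  rw [Path.refl_symm]
  rw [trans_eq_comp, trans_eq_comp, ← id_eq_refl]
  simp

lemma isSmallQ_cast_self {x y : X} (h : x = y) (β : Path y y) (hβ : IsSmallQ (⟦β⟧ : Path.Homotopic.Quotient y y)) :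
    IsSmallQ (⟦β.cast h h⟧ : Path.Homotopic.Quotient x x) := by
  subst h
  have h2 : β.cast rfl rfl = β := by ext t; rfl
  rwa [h2]

lemma isSmallQ_conj_cast {x x' y : X} (h : x' = x) (Q : Path x y) (β : Path y y)
    (hs : IsSmallQ (⟦Q.trans (β.trans Q.symm)⟧ : Path.Homotopic.Quotient x x)) :
    IsSmallQ (⟦(Q.cast h rfl).trans (β.trans (Q.cast h rfl).symm)⟧ :
      Path.Homotopic.Quotient x' x') := by
  subst h
  have h2 : Q.cast rfl rfl = Q := by ext t; rfl
  rwa [h2]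

/-- Conjugating a small class by a path inside a distinguished neighborhood of a semi-locally
small loop structure keeps it small. -/
lemma isSmallQ_conj_step {U : Set X} (hUo : IsOpen U)
    (hU : ∀ y ∈ U, loopsIn U y = smallSet X y) {x y : X}
    (s : Path x y) (hs : ∀ τ, s τ ∈ U) (β : Path y y)
    (hβ : IsSmallQ (⟦β⟧ : Path.Homotopic.Quotient y y)) :
    IsSmallQ (⟦s.trans (β.trans s.symm)⟧ : Path.Homotopic.Quotient x x) := by
  have hyU : y ∈ U := s.target ▸ hs 1
  have hxU : x ∈ U := s.source ▸ hs 0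
  obtain ⟨δ, hδU, hδq⟩ := hβ U (hUo.mem_nhds hyU)
  set L : Path x x := s.trans (δ.trans s.symm) with hL
  have hrange : range L ⊆ U := by
    rw [hL, Path.trans_range, Path.trans_range, Path.symm_range]
    refine union_subset (range_subset_iff.mpr hs)
      (union_subset (range_subset_iff.mpr hδU) (range_subset_iff.mpr hs))
  have hLvals : ∀ τ, L τ ∈ U := fun τ => hrange (mem_range_self τ)
  have hmem : fromLoop ⟦L⟧ ∈ loopsIn U x := ⟨L, hLvals, rfl⟩
  rw [hU x hxU] at hmem
  have hsm : IsSmallQ (toLoop (fromLoop (⟦L⟧ : Path.Homotopic.Quotient x x))) :=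
    IsSmall.toQ hmem
  change IsSmallQ (⟦L⟧ : Path.Homotopic.Quotient x x) at hsm
  have hclass : (⟦L⟧ : Path.Homotopic.Quotient x x) = ⟦s.trans (β.trans s.symm)⟧ := by
    apply toHom_inj
    rw [hL, trans_eq_comp, trans_eq_comp, trans_eq_comp, trans_eq_comp, hδq]
  rwa [hclass] at hsm

end AuxiliaryLemmas

section CoveringLemmas

open unitInterval Set

variable {p : E → X}

/-- A local section of a trivialization through a given point. -/
lemma exists_section_thru {F : Type*} [TopologicalSpace F] (T : Bundle.Trivialization F p)
    (e' : E) (he' : p e' ∈ T.baseSet) :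
    ∃ sec : X → E, ContinuousOn sec T.baseSet ∧ (∀ w ∈ T.baseSet, p (sec w) = w) ∧
      sec (p e') = e' := by
  have hsrc : e' ∈ T.source := T.mem_source.mpr he'
  refine ⟨fun w => T.toOpenPartialHomeomorph.symm (w, (T e').2), ?_, ?_, ?_⟩
  · have hcont : ContinuousOn T.toOpenPartialHomeomorph.symm T.target :=
      T.toOpenPartialHomeomorph.continuousOn_symm
    refine hcont.comp (Continuous.continuousOn (by fun_prop)) ?_
    intro w hw
    rw [T.target_eq]
    exact ⟨hw, trivial⟩
  · intro w hw
    exact T.proj_symm_apply (by rw [T.mem_target]; exact hw)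
  · show T.toOpenPartialHomeomorph.symm (p e', (T e').2) = e'
    have : ((p e', (T e').2) : X × F) = T e' := T.mk_proj_snd hsrc
    rw [this]
    exact T.toOpenPartialHomeomorph.left_inv hsrc

/-- Gluing step: extend a partial lift of `H` from a closed set `D` to `D ∪ P`, where `H` maps
`P` into the domain of a local section. -/
lemma glue_step (hp : IsCoveringMap p) {H : C(I × I, X)} {D P : Set (I × I)} {F₀ : I × I → E}
    (hD : IsClosed D) (hP : IsClosed P) (hconn : IsPreconnected (D ∩ P))
    {z₀ : I × I} (hz₀ : z₀ ∈ D ∩ P)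
    (hF₀ : ContinuousOn F₀ D) (hlift : ∀ z ∈ D, p (F₀ z) = H z)
    {W : Set X} {sec : X → E} (hsec : ContinuousOn sec W) (hps : ∀ w ∈ W, p (sec w) = w)
    (hHP : ∀ z ∈ P, H z ∈ W) (hagree : sec (H z₀) = F₀ z₀) :
    ∃ F : I × I → E, ContinuousOn F (D ∪ P) ∧ (∀ z ∈ D ∪ P, p (F z) = H z) ∧ EqOn F F₀ D := by
  classical
  set l : I × I → E := fun z => sec (H z) with hl
  have hlcont : ContinuousOn l P := hsec.comp H.continuous.continuousOn hHP
  have hlp : ∀ z ∈ P, p (l z) = H z := fun z hz => hps _ (hHP z hz)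
  have heq : EqOn F₀ l (D ∩ P) := by
    refine hp.eqOn_of_comp_eqOn hconn (hF₀.mono inter_subset_left)
      (hlcont.mono inter_subset_right) (fun z hz => ?_) hz₀ ?_
    · show p (F₀ z) = p (l z)
      rw [hlift z hz.1, hlp z hz.2]
    · rw [hl]; simp only [hagree]
  refine ⟨D.piecewise F₀ l, ?_, ?_, fun z hz => D.piecewise_eq_of_mem _ _ hz⟩
  · have heqP : EqOn (D.piecewise F₀ l) l P := by
      intro z hz
      by_cases hzD : z ∈ D
      · rw [D.piecewise_eq_of_mem _ _ hzD]; exact heq ⟨hzD, hz⟩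
      · exact D.piecewise_eq_of_notMem _ _ hzD
    intro z hz
    rw [continuousWithinAt_union]
    constructor
    · by_cases hzD : z ∈ D
      · exact ((hF₀ z hzD).congr (fun w hw => D.piecewise_eq_of_mem _ _ hw)
          (D.piecewise_eq_of_mem _ _ hzD))
      · exact continuousWithinAt_of_notMem_closure (by rwa [hD.closure_eq])
    · by_cases hzP : z ∈ P
      · exact ((hlcont z hzP).congr (fun w hw => heqP hw) (heqP hzP))
      · exact continuousWithinAt_of_notMem_closure (by rwa [hP.closure_eq])
  · intro z hz
    by_cases hzD : z ∈ D
    · rw [D.piecewise_eq_of_mem _ _ hzD]; exact hlift z hzD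
    · rw [D.piecewise_eq_of_notMem _ _ hzD]
      exact hlp z (hz.resolve_left hzD)

lemma Icc_zero_one_eq_univ : (Icc (0:I) 1) = univ :=
  eq_univ_of_forall fun s => ⟨unitInterval.nonneg', unitInterval.le_one'⟩

lemma isPreconnected_Icc_I (a b : I) : _root_.IsPreconnected (Icc a b) := by
  haveI : Fact ((0:ℝ) ≤ 1) := ⟨zero_le_one⟩
  exact isPreconnected_Icc

/-- Lifting a square against a covering map, given a lift of the bottom edge. -/
theorem square_lift (hp : IsCoveringMap p) (H : C(I × I, X)) (G₀ : C(I, E))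
    (hG₀ : ∀ s, p (G₀ s) = H (s, 0)) :
    ∃ F : I × I → E, Continuous F ∧ (∀ z, p (F z) = H z) ∧ ∀ s, F (s, 0) = G₀ s := by
  classical
  set c : I × I → Set (I × I) := fun z => H ⁻¹' ((hp (H z)).2.choose) with hc
  have hc₁ : ∀ z, IsOpen (c z) := fun z =>
    ((hp (H z)).2.choose_spec.2.1).preimage H.continuous
  have hc₂ : (univ : Set (I × I)) ⊆ ⋃ z, c z := fun z _ =>
    mem_iUnion.mpr ⟨z, (hp (H z)).2.choose_spec.1⟩
  obtain ⟨t, ht0, htmono, ⟨N, htN⟩, hcell⟩ :=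
    exists_monotone_Icc_subset_open_cover_unitInterval_prod_self hc₁ hc₂
  have hcov : ∀ n m : ℕ, ∃ W : Set X,
      (∀ z ∈ Icc (t n) (t (n+1)) ×ˢ Icc (t m) (t (m+1)), H z ∈ W) ∧
      ∀ e' : E, p e' ∈ W → ∃ sec : X → E, ContinuousOn sec W ∧ (∀ w ∈ W, p (sec w) = w) ∧
        sec (p e') = e' := by
    intro n m
    obtain ⟨z, hz⟩ := hcell n m
    refine ⟨(hp (H z)).2.choose, fun w hw => hz hw, fun e' he' => ?_⟩
    haveI : Nonempty (p ⁻¹' {H z}) := ⟨((hp (H z)).2.choose_spec.2.2.2.choose ⟨e', he'⟩).2⟩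
    exact exists_section_thru (hp (H z)).toTrivialization e' he'
  set Lift : Set (I × I) → Prop := fun D =>
    ∃ F : I × I → E, ContinuousOn F D ∧ (∀ z ∈ D, p (F z) = H z) ∧
      ∀ s, (s, (0:I)) ∈ D → F (s, 0) = G₀ s with hLift
  have base : Lift ((univ : Set I) ×ˢ Icc (0:I) (t 0)) := by
    refine ⟨fun z => G₀ z.1, (G₀.continuous.comp continuous_fst).continuousOn, ?_, fun s _ => rfl⟩
    intro z hz
    have h2 : z.2 = 0 := le_antisymm (ht0 ▸ hz.2.2) unitInterval.nonneg'
    have hz2 : ((z.1, (0:I)) : I × I) = z := by rw [← h2]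
    rw [hG₀ z.1, hz2]
  have row : ∀ m : ℕ, Lift ((univ : Set I) ×ˢ Icc (0:I) (t m)) →
      Lift ((univ : Set I) ×ˢ Icc (0:I) (t (m+1))) := by
    intro m hDm
    set J : Set I := Icc (t m) (t (m+1)) with hJ
    set B : Set (I × I) := (univ : Set I) ×ˢ Icc (0:I) (t m) with hB
    have hJm : (t m) ∈ J := ⟨le_refl _, htmono (Nat.le_succ m)⟩
    have hBclosed : IsClosed B := (isClosed_univ).prod isClosed_Icc
    have hsing : Icc (0:I) (t m) ∩ J = {t m} :=
      Icc_inter_Icc_eq_singleton unitInterval.nonneg' (htmono (Nat.le_succ m))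
    have hbotmem : ∀ s : I, (s, (0:I)) ∈ B :=
      fun s => ⟨trivial, ⟨le_refl _, unitInterval.nonneg'⟩⟩
    have inner : ∀ n : ℕ, Lift (B ∪ Icc (0:I) (t n) ×ˢ J) := by
      intro n
      induction n with
      | zero =>
        obtain ⟨F₀, hF₀c, hF₀l, hF₀b⟩ := hDm
        obtain ⟨W, hHW, hsecex⟩ := hcov 0 m
        set P : Set (I × I) := Icc (0:I) (t 0) ×ˢ J with hP
        have hz₀D : ((0:I), t m) ∈ B := ⟨trivial, ⟨unitInterval.nonneg', le_refl _⟩⟩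
        have hz₀P : ((0:I), t m) ∈ P := ⟨⟨le_refl _, ht0.ge⟩, hJm⟩
        have hPsub : P ⊆ Icc (t 0) (t 1) ×ˢ Icc (t m) (t (m+1)) := by
          intro z hz
          have h1 : z.1 = t 0 := le_antisymm hz.1.2 (ht0 ▸ unitInterval.nonneg')
          exact ⟨⟨h1.ge, h1.le.trans (htmono (Nat.le_succ 0))⟩, hz.2⟩
        have hHP : ∀ z ∈ P, H z ∈ W := fun z hz => hHW z (hPsub hz)
        have hconn : IsPreconnected (B ∩ P) := by
          have : B ∩ P = Icc (0:I) (t 0) ×ˢ ({t m} : Set I) := by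
            rw [hB, hP, prod_inter_prod, univ_inter, hsing]
          rw [this]
          exact (isPreconnected_Icc_I _ _).prod isPreconnected_singleton
        have hpz₀ : p (F₀ ((0:I), t m)) ∈ W := by
          rw [hF₀l _ hz₀D]; exact hHP _ hz₀P
        obtain ⟨sec, hsc, hsp, hse⟩ := hsecex _ hpz₀
        have hagree : sec (H ((0:I), t m)) = F₀ ((0:I), t m) := by
          rw [← hF₀l _ hz₀D]; exact hse
        obtain ⟨F, hFc, hFl, hFeq⟩ := glue_step hp hBclosed
          (isClosed_Icc.prod isClosed_Icc) hconn ⟨hz₀D, hz₀P⟩ hF₀c hF₀l hsc hsp hHP hagree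
        exact ⟨F, hFc, hFl, fun s _ => by
          rw [hFeq (hbotmem s)]; exact hF₀b s (hbotmem s)⟩
      | succ n ih =>
        obtain ⟨F₀, hF₀c, hF₀l, hF₀b⟩ := ih
        obtain ⟨W, hHW, hsecex⟩ := hcov n m
        set D : Set (I × I) := B ∪ Icc (0:I) (t n) ×ˢ J with hD
        set P : Set (I × I) := Icc (t n) (t (n+1)) ×ˢ J with hP
        have hz₀D : ((t n), t m) ∈ D := Or.inl ⟨trivial, ⟨unitInterval.nonneg', le_refl _⟩⟩
        have hz₀P : ((t n), t m) ∈ P := ⟨⟨le_refl _, htmono (Nat.le_succ n)⟩, hJm⟩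
        have hHP : ∀ z ∈ P, H z ∈ W := fun z hz => hHW z hz
        have hconn : IsPreconnected (D ∩ P) := by
          have e1 : ((univ : Set I) ×ˢ Icc (0:I) (t m)) ∩ (Icc (t n) (t (n+1)) ×ˢ J) =
              Icc (t n) (t (n+1)) ×ˢ ({t m} : Set I) := by
            rw [prod_inter_prod, univ_inter, hsing]
          have e2 : (Icc (0:I) (t n) ×ˢ J) ∩ (Icc (t n) (t (n+1)) ×ˢ J) =
              ({t n} : Set I) ×ˢ J := by
            rw [prod_inter_prod, inter_self,
              Icc_inter_Icc_eq_singleton unitInterval.nonneg' (htmono (Nat.le_succ n))]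
          have hDP : D ∩ P = Icc (t n) (t (n+1)) ×ˢ ({t m} : Set I) ∪
              ({t n} : Set I) ×ˢ J := by
            rw [hD, hP, hB, union_inter_distrib_right, e1, e2]
          rw [hDP]
          refine IsPreconnected.union ((t n), t m) ⟨⟨le_refl _, htmono (Nat.le_succ n)⟩, rfl⟩
            ⟨rfl, hJm⟩ ((isPreconnected_Icc_I _ _).prod isPreconnected_singleton)
            (isPreconnected_singleton.prod (isPreconnected_Icc_I _ _))
        have hDclosed : IsClosed D := hBclosed.union (isClosed_Icc.prod isClosed_Icc)
        have hpz₀ : p (F₀ ((t n), t m)) ∈ W := by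
          rw [hF₀l _ hz₀D]; exact hHP _ hz₀P
        obtain ⟨sec, hsc, hsp, hse⟩ := hsecex _ hpz₀
        have hagree : sec (H ((t n), t m)) = F₀ ((t n), t m) := by
          rw [← hF₀l _ hz₀D]; exact hse
        obtain ⟨F, hFc, hFl, hFeq⟩ := glue_step hp hDclosed
          (isClosed_Icc.prod isClosed_Icc) hconn ⟨hz₀D, hz₀P⟩ hF₀c hF₀l hsc hsp hHP hagree
        have hDP : D ∪ P = B ∪ Icc (0:I) (t (n+1)) ×ˢ J := by
          rw [hD, hP, union_assoc, ← union_prod,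
            Icc_union_Icc_eq_Icc unitInterval.nonneg' (htmono (Nat.le_succ n))]
        rw [hDP] at hFc hFl
        refine ⟨F, hFc, hFl, fun s _ => ?_⟩
        rw [hFeq (Or.inl (hbotmem s))]
        exact hF₀b s (Or.inl (hbotmem s))
    have hfin := inner N
    have hN1 : Icc (0:I) (t N) = univ := by rw [htN N le_rfl]; exact Icc_zero_one_eq_univ
    have : B ∪ Icc (0:I) (t N) ×ˢ J = (univ : Set I) ×ˢ Icc (0:I) (t (m+1)) := by
      rw [hN1, hB, ← prod_union,
        Icc_union_Icc_eq_Icc unitInterval.nonneg' (htmono (Nat.le_succ m))]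
    rwa [this] at hfin
  have main : ∀ m : ℕ, Lift ((univ : Set I) ×ˢ Icc (0:I) (t m)) := by
    intro m
    induction m with
    | zero => exact base
    | succ m ih => exact row m ih
  have hfin := main N
  have : (univ : Set I) ×ˢ Icc (0:I) (t N) = (univ : Set (I × I)) := by
    rw [htN N le_rfl, Icc_zero_one_eq_univ, univ_prod_univ]
  rw [this] at hfin
  obtain ⟨F, hFc, hFl, hFb⟩ := hfin
  exact ⟨F, continuousOn_univ.mp hFc, fun z => hFl z trivial,
    fun s => hFb s trivial⟩

/-- A covering map induces an injection on path homotopy classes. -/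
theorem homotopic_of_map_homotopic (hp : IsCoveringMap p) {e₁ e₂ : E} (g₁ g₂ : Path e₁ e₂)
    (h : (g₁.map hp.continuous).Homotopic (g₂.map hp.continuous)) : g₁.Homotopic g₂ := by
  obtain ⟨Hom⟩ := h
  set H : C(I × I, X) := Hom.toContinuousMap with hH
  have hH0 : ∀ s : I, H (s, 0) = p e₁ := by
    intro s
    show Hom (s, 0) = p e₁
    rw [Hom.eq_fst s (show (0:I) ∈ ({0,1} : Set I) from by norm_num)]
    exact (g₁.map hp.continuous).source
  have hH1 : ∀ s : I, H (s, 1) = p e₂ := by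
    intro s
    show Hom (s, 1) = p e₂
    rw [Hom.eq_fst s (show (1:I) ∈ ({0,1} : Set I) from by norm_num)]
    exact (g₁.map hp.continuous).target
  obtain ⟨F, hFc, hFl, hFb⟩ := square_lift hp H (ContinuousMap.const I e₁)
    (fun s => by rw [hH0 s]; rfl)
  have hleft : ∀ x : I, F (0, x) = g₁ x := by
    have := hp.eq_of_comp_eq (g₁ := fun x : I => F (0, x)) (g₂ := fun x : I => g₁ x)
      (hFc.comp (Continuous.prodMk_right 0)) g₁.continuous ?_ 0 ?_
    · exact fun x => congrFun this x
    · funext x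
      show p (F (0, x)) = p (g₁ x)
      rw [hFl (0, x)]
      exact Hom.apply_zero x
    · show F (0, 0) = g₁ 0
      rw [hFb 0]; simp
  have hright : ∀ x : I, F (1, x) = g₂ x := by
    have := hp.eq_of_comp_eq (g₁ := fun x : I => F (1, x)) (g₂ := fun x : I => g₂ x)
      (hFc.comp (Continuous.prodMk_right 1)) g₂.continuous ?_ 0 ?_
    · exact fun x => congrFun this x
    · funext x
      show p (F (1, x)) = p (g₂ x)
      rw [hFl (1, x)]
      exact Hom.apply_one x
    · show F (1, 0) = g₂ 0
      rw [hFb 1]; simp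
  have htop : ∀ s : I, F (s, 1) = e₂ := by
    intro s
    have hconst := hp.const_of_comp (g := fun s : I => F (s, 1))
      (hFc.comp (continuous_id.prodMk continuous_const)) ?_ s 0
    · rw [hconst, hleft 1]; simp
    · intro a a'
      show p (F (a, 1)) = p (F (a', 1))
      rw [hFl (a, 1), hFl (a', 1), hH1, hH1]
  refine Nonempty.intro ?_
  exact {
    toContinuousMap := ⟨F, hFc⟩
    map_zero_left := fun x => hleft x
    map_one_left := fun x => hright x
    prop' := by
      intro s x hx
      simp only [Set.mem_insert_iff, Set.mem_singleton_iff] at hx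
      rcases hx with rfl | rfl
      · show F (s, 0) = g₁ 0
        rw [hFb s]; simp
      · show F (s, 1) = g₁ 1
        rw [htop s]; simp }

end CoveringLemmas

section Chain

open unitInterval Set

/-- Along any path in the base, one can find a homotopic "chain" path through distinguished
neighborhoods, conjugation along which preserves smallness. The chain is produced as (the image
of) a path in `E`. -/
lemma exists_chain (hX : SemiLocallySmallLoop X) (f : C(E, X)) {e xt : E} (a : Path e xt) :
    ∃ AE : Path e xt, ∀ β : Path (f xt) (f xt),
      IsSmallQ (⟦β⟧ : Path.Homotopic.Quotient (f xt) (f xt)) →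
      IsSmallQ (⟦(AE.map f.continuous).trans (β.trans (AE.map f.continuous).symm)⟧ :
        Path.Homotopic.Quotient (f e) (f e)) := by
  classical
  set B : Path (f e) (f xt) := a.map f.continuous with hBdef
  set Ux : X → Set X := fun w => Classical.choose (hX w) with hUx
  have hUxspec : ∀ w : X, IsOpen (Ux w) ∧ w ∈ Ux w ∧
      ∀ y ∈ Ux w, loopsIn (Ux w) y = smallSet X y := fun w => Classical.choose_spec (hX w)
  set c : I → Set I := fun s => B ⁻¹' (Ux (B s)) with hc
  have hc₁ : ∀ s, IsOpen (c s) := fun s => (hUxspec (B s)).1.preimage B.continuous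
  have hc₂ : (univ : Set I) ⊆ ⋃ s, c s := fun s _ =>
    mem_iUnion.mpr ⟨s, (hUxspec (B s)).2.1⟩
  obtain ⟨t, ht0, htmono, ⟨N, htN⟩, hcell⟩ :=
    exists_monotone_Icc_subset_open_cover_unitInterval hc₁ hc₂
  set u : ℕ → I := fun j => t (N - j) with hu
  have huanti : ∀ j, u (j+1) ≤ u j := fun j => htmono (Nat.sub_le_sub_left (Nat.le_succ j) N)
  have hu0 : u 0 = 1 := by rw [hu]; simp only [Nat.sub_zero]; exact htN N le_rfl
  have huN : u N = 0 := by rw [hu]; simp only [Nat.sub_self]; exact ht0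
  -- distinguished neighborhood for each chain segment
  have hchaincov : ∀ j, ∃ U : Set X, IsOpen U ∧ (∀ y ∈ U, loopsIn U y = smallSet X y) ∧
      ∀ v : I, v ∈ Icc (u (j+1)) (u j) → B v ∈ U := by
    intro j
    have hsub : ∃ n : ℕ, Icc (u (j+1)) (u j) ⊆ Icc (t n) (t (n+1)) := by
      by_cases hj : j < N
      · refine ⟨N - (j+1), ?_⟩
        have h1 : u (j+1) = t (N - (j+1)) := rfl
        have h2 : u j = t ((N - (j+1)) + 1) := by
          show t (N - j) = t ((N - (j+1)) + 1)
          rw [show N - j = (N - (j+1)) + 1 from by omega]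
        rw [h1, h2]
      · refine ⟨0, ?_⟩
        have h1 : u j = t 0 := by
          show t (N - j) = t 0
          rw [show N - j = 0 from by omega]
        have h2 : u (j+1) = t 0 := by
          show t (N - (j+1)) = t 0
          rw [show N - (j+1) = 0 from by omega]
        rw [h1, h2]
        exact Icc_subset_Icc le_rfl (htmono (Nat.le_succ 0))
    obtain ⟨n, hn⟩ := hsub
    obtain ⟨s, hs⟩ := hcell n
    exact ⟨Ux (B s), (hUxspec (B s)).1, (hUxspec (B s)).2.2,
      fun v hv => hs (hn hv)⟩
  -- the chain segments in E
  have hseg : ∀ j, ∃ sE : Path (a (u (j+1))) (a (u j)),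
      ∀ τ : I, ∃ v : I, v ∈ Icc (u (j+1)) (u j) ∧ sE τ = a v := by
    intro j
    have hle : ((u (j+1) : ℝ)) ≤ (u j : ℝ) := huanti j
    have hx1 : a (u (j+1)) = a.extend ((u (j+1) : ℝ) ⊓ (u j : ℝ)) := by
      rw [inf_eq_left.mpr hle, a.extend_extends']
    have hx2 : a (u j) = a.extend (u j : ℝ) := (a.extend_extends' _).symm
    refine ⟨(a.truncate (u (j+1) : ℝ) (u j : ℝ)).cast hx1 hx2, ?_⟩
    intro τ
    have hval : ((a.truncate (u (j+1) : ℝ) (u j : ℝ)).cast hx1 hx2) τ =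
        a.extend (min (max (τ : ℝ) (u (j+1) : ℝ)) (u j : ℝ)) := rfl
    set ξ : ℝ := min (max (τ : ℝ) (u (j+1) : ℝ)) (u j : ℝ) with hξ
    have hξ1 : (u (j+1) : ℝ) ≤ ξ := le_min (le_max_right _ _) hle
    have hξ2 : ξ ≤ (u j : ℝ) := min_le_right _ _
    have hξ0 : (0:ℝ) ≤ ξ := le_trans (u (j+1)).2.1 hξ1
    have hξ1' : ξ ≤ 1 := le_trans hξ2 (u j).2.2
    have hmem : ξ ∈ Icc (0:ℝ) 1 := ⟨hξ0, hξ1'⟩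
    refine ⟨⟨ξ, hmem⟩, ⟨hξ1, hξ2⟩, ?_⟩
    rw [hval]
    exact a.extend_apply hmem
  choose sE hsE using hseg
  -- the chain
  have h0 : a (u 0) = xt := by rw [hu0]; exact a.target
  set Θ : ∀ j : ℕ, Path (a (u j)) xt := fun j =>
    Nat.rec ((Path.refl xt).cast h0 rfl) (fun j Θj => (sE j).trans Θj) j with hΘ
  have hΘ0 : Θ 0 = (Path.refl xt).cast h0 rfl := rfl
  have hΘs : ∀ j, Θ (j+1) = (sE j).trans (Θ j) := fun j => rfl
  -- transport of smallness along the chain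
  have key : ∀ j, ∀ β : Path (f xt) (f xt),
      IsSmallQ (⟦β⟧ : Path.Homotopic.Quotient (f xt) (f xt)) →
      IsSmallQ (⟦((Θ j).map f.continuous).trans (β.trans (((Θ j).map f.continuous)).symm)⟧ :
        Path.Homotopic.Quotient (f (a (u j))) (f (a (u j)))) := by
    intro j
    induction j with
    | zero =>
      intro β hβ
      have hmapcast : (Θ 0).map f.continuous =
          (Path.refl (f xt)).cast (congrArg f h0) rfl := by
        ext τ; rfl
      rw [hmapcast, quot_refl_conj (congrArg f h0) β]
      exact isSmallQ_cast_self (congrArg f h0) β hβ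
    | succ j ih =>
      intro β hβ
      obtain ⟨U, hUo, hUl, hUvals⟩ := hchaincov j
      have hmap : (Θ (j+1)).map f.continuous =
          ((sE j).map f.continuous).trans ((Θ j).map f.continuous) := by
        rw [hΘs j, Path.map_trans]
      rw [hmap, quot_regroup]
      refine isSmallQ_conj_step hUo hUl ((sE j).map f.continuous) ?_ _ (ih β hβ)
      intro τ
      obtain ⟨v, hv, hval⟩ := hsE j τ
      show f ((sE j) τ) ∈ U
      rw [hval]
      exact hUvals v hv
  -- conclude
  have hNe : e = a (u N) := by rw [huN]; exact a.source.symm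
  refine ⟨(Θ N).cast hNe rfl, ?_⟩
  intro β hβ
  have hcast : ((Θ N).cast hNe rfl).map f.continuous =
      ((Θ N).map f.continuous).cast (congrArg f hNe) rfl := by
    ext τ; rfl
  rw [hcast]
  exact isSmallQ_conj_cast (congrArg f hNe) ((Θ N).map f.continuous) β (key N β hβ)

end Chain

/-- if `X` is a path-connected semi-locally small loop space and some covering
`p : X̃ → X` satisfies `p₋(π₁(X̃,xt)) = π₁ˢ(X, p xt)` at one point, then every loop in `X̃` is
small. -/
theorem covering_is_small_of_range_eq_smallSet {E X : Type*} [TopologicalSpace E]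
    [TopologicalSpace X] [PathConnectedSpace X] [PathConnectedSpace E]
    (hX : SemiLocallySmallLoop X) (p : C(E, X)) (hp : IsCoveringMap p) (xt : E)
    (himg : Set.range (piMap p xt) = smallSet X (p xt)) :
    ∀ (e : E) (γ : FundamentalGroup E e), IsSmall γ := by
  intro e γ
  rw [show IsSmall γ ↔ ∀ V ∈ nhds e, ∃ δ : Path e e, (∀ t, δ t ∈ V) ∧ fromLoop ⟦δ⟧ = γ from Iff.rfl]
  intro V hV
  obtain ⟨g, hg⟩ := Quotient.exists_rep (toLoop γ)
  -- Step 1: the projected loop class is small in X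
  set a : Path e xt := PathConnectedSpace.somePath e xt with ha
  obtain ⟨AE, hAE⟩ := exists_chain hX p a
  set A : Path (p e) (p xt) := AE.map p.continuous with hAdef
  set pg : Path (p e) (p e) := g.map p.continuous with hpgdef
  set ℓ : Path xt xt := AE.symm.trans (g.trans AE) with hℓdef
  have hℓβ : ℓ.map p.continuous = A.symm.trans (pg.trans A) := by
    rw [hℓdef, Path.map_trans, Path.map_trans, Path.map_symm, hAdef, hpgdef]
  have hsmβ : IsSmallQ (⟦A.symm.trans (pg.trans A)⟧ :
      Path.Homotopic.Quotient (p xt) (p xt)) := by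
    have hmem : piMap p xt (fromLoop ⟦ℓ⟧) ∈ smallSet X (p xt) := by
      rw [← himg]; exact ⟨fromLoop ⟦ℓ⟧, rfl⟩
    have hsm : IsSmallQ (toLoop (piMap p xt (fromLoop ⟦ℓ⟧))) := IsSmall.toQ hmem
    have heq : toLoop (piMap p xt (fromLoop ⟦ℓ⟧)) =
        (⟦A.symm.trans (pg.trans A)⟧ : Path.Homotopic.Quotient (p xt) (p xt)) := by
      show (⟦ℓ.map p.continuous⟧ : Path.Homotopic.Quotient (p xt) (p xt)) = _
      rw [hℓβ]
    rwa [heq] at hsm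
  have hconj := hAE (A.symm.trans (pg.trans A)) hsmβ
  have hcancel :
      (⟦A.trans ((A.symm.trans (pg.trans A)).trans A.symm)⟧ :
        Path.Homotopic.Quotient (p e) (p e)) = ⟦pg⟧ := quot_cancel A pg
  rw [hcancel] at hconj
  -- Step 2: produce a small representative upstairs through a local section
  haveI : Nonempty (p ⁻¹' {p e}) := ⟨⟨e, rfl⟩⟩
  obtain ⟨sec, hsc, hsp, hse⟩ := exists_section_thru (hp (p e)).toTrivialization e
    (hp (p e)).mem_toTrivialization_baseSet
  have hbase_nhds : (hp (p e)).toTrivialization.baseSet ∈ nhds (p e) :=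
    ((hp (p e)).toTrivialization.open_baseSet).mem_nhds (hp (p e)).mem_toTrivialization_baseSet
  have hcontAt : ContinuousAt sec (p e) := hsc.continuousAt hbase_nhds
  have hpre : sec ⁻¹' V ∈ nhds (p e) := hcontAt.preimage_mem_nhds (by rw [hse]; exact hV)
  obtain ⟨δ, hδvals, hδq⟩ := hconj ((hp (p e)).toTrivialization.baseSet ∩ sec ⁻¹' V)
    (Filter.inter_mem hbase_nhds hpre)
  have hcont : Continuous (fun τ => sec (δ τ)) :=
    hsc.comp_continuous δ.continuous (fun τ => (hδvals τ).1)
  set δt : Path e e :=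
    { toFun := fun τ => sec (δ τ)
      continuous_toFun := hcont
      source' := by
        show sec (δ 0) = e
        rw [δ.source, hse]
      target' := by
        show sec (δ 1) = e
        rw [δ.target, hse] } with hδt
  have hδtV : ∀ τ, δt τ ∈ V := fun τ => (hδvals τ).2
  have hproj : δt.map p.continuous = δ := by
    ext τ
    exact hsp _ (hδvals τ).1
  have hhom : (δt.map p.continuous).Homotopic (g.map p.continuous) := by
    rw [hproj]
    exact Quotient.exact hδq
  have hfinal : δt.Homotopic g := homotopic_of_map_homotopic hp δt g hhom
  refine ⟨δt, hδtV, ?_⟩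
  refine (fromLoop_eq_iff _ _).mpr ?_
  rw [← hg]
  exact Quotient.sound hfinal


end
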